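/- Let G be a finite undirected connected graph without dangling edges and let P̂^{(α)} = α P̂^{(1)} + (1−α) P̂^{(0)} be the backtrack-downweighted edge transition matrix (P̂^{(1)} the uniform line-graph walk, P̂^{(0)} the non-backtracking walk), for α ∈ [0,1]. Then for any α for which the edge chain is ergodic, the second-order mean return time of the associated second-order walk at equilibrium satisfies τ̃_i = (Σ_{j∈V} d_j)/d_i for every node i, independently of α. -/

import Mathlib

open scoped ENNReal Classical


noncomputable def hitBy {V : Type*} (P : V → V → ℝ≥0∞) (S : Set V) : ℕ → V → ℝ≥0∞
  | 0, i => if i ∈ S then 1 else 0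
  | n + 1, i => if i ∈ S then 1 else ∑' j, P i j * hitBy P S n j

noncomputable def meanHit {V : Type*} (P : V → V → ℝ≥0∞) (S : Set V) (i : V) : ℝ≥0∞ :=
  ∑' n, (1 - hitBy P S n i)

noncomputable def returnTime {V : Type*} (P : V → V → ℝ≥0∞) (S : Set V) (i : V) : ℝ≥0∞ :=
  1 + ∑' j, P i j * meanHit P S j

section Kac

variable {E : Type*} [Fintype E]

noncomputable def avoidFn (P : E → E → ℝ≥0∞) (S : Set E) : ℕ → E → ℝ≥0∞
  | 0, i => if i ∈ S then 0 else 1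
  | n + 1, i => if i ∈ S then 0 else ∑ j, P i j * avoidFn P S n j

variable {P : E → E → ℝ≥0∞} {S : Set E}

lemma avoidFn_zero (i : E) : avoidFn P S 0 i = if i ∈ S then 0 else 1 := rfl

lemma avoidFn_succ (n : ℕ) (i : E) :
    avoidFn P S (n + 1) i = if i ∈ S then 0 else ∑ j, P i j * avoidFn P S n j := rfl

lemma avoid_le_one (hrow : ∀ e, ∑ f, P e f = 1) : ∀ n i, avoidFn P S n i ≤ 1 := by
  intro n
  induction n with
  | zero => intro i; rw [avoidFn]; split <;> simp
  | succ n ih =>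
    intro i
    rw [avoidFn]
    split
    · exact zero_le_one
    · calc ∑ j, P i j * avoidFn P S n j ≤ ∑ j, P i j * 1 := by
            exact Finset.sum_le_sum fun j _ => mul_le_mul_right (ih j) _
        _ = 1 := by simp [hrow i]

lemma hit_add_avoid (hrow : ∀ e, ∑ f, P e f = 1) :
    ∀ n i, hitBy P S n i + avoidFn P S n i = 1 := by
  intro n
  induction n with
  | zero => intro i; rw [hitBy, avoidFn]; split <;> simp
  | succ n ih =>
    intro i
    rw [hitBy, avoidFn]
    split
    · simp
    · rw [tsum_fintype, ← Finset.sum_add_distrib]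
      calc ∑ j, (P i j * hitBy P S n j + P i j * avoidFn P S n j)
          = ∑ j, P i j * (hitBy P S n j + avoidFn P S n j) := by
            simp [mul_add]
        _ = 1 := by simp_rw [ih]; simp [hrow i]

lemma one_sub_hit (hrow : ∀ e, ∑ f, P e f = 1) (n : ℕ) (i : E) :
    1 - hitBy P S n i = avoidFn P S n i := by
  have h := hit_add_avoid (S := S) hrow n i
  have hfin : hitBy P S n i ≠ ⊤ :=
    ne_top_of_le_ne_top ENNReal.one_ne_top (h ▸ self_le_add_right _ _)
  rw [← h, ENNReal.add_sub_cancel_left hfin]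

lemma meanHit_eq (hrow : ∀ e, ∑ f, P e f = 1) (i : E) :
    meanHit P S i = ∑' n, avoidFn P S n i := by
  unfold meanHit
  exact tsum_congr fun n => one_sub_hit hrow n i

lemma avoid_antitone (hrow : ∀ e, ∑ f, P e f = 1) :
    ∀ n i, avoidFn P S (n + 1) i ≤ avoidFn P S n i := by
  intro n
  induction n with
  | zero =>
    intro i
    rw [avoidFn, avoidFn]
    split
    · exact le_refl _
    · calc ∑ j, P i j * avoidFn P S 0 j ≤ ∑ j, P i j * 1 :=
            Finset.sum_le_sum fun j _ => mul_le_mul_right (avoid_le_one hrow 0 j) _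
        _ = 1 := by simp [hrow i]
  | succ n ih =>
    intro i
    rw [avoidFn, show n + 1 = n + 1 from rfl]
    conv_rhs => rw [avoidFn]
    split
    · exact le_refl _
    · exact Finset.sum_le_sum fun j _ => mul_le_mul_right (ih j) _

lemma avoid_mono (hrow : ∀ e, ∑ f, P e f = 1) {m n : ℕ} (h : m ≤ n) (i : E) :
    avoidFn P S n i ≤ avoidFn P S m i :=
  antitone_nat_of_succ_le (f := fun n => avoidFn P S n i)
    (fun k => avoid_antitone hrow k i) h

/-- quantitative decay: avoid (m + (n+1)) ≤ avoid m * sup (avoid n) -/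
lemma avoid_shift (hrow : ∀ e, ∑ f, P e f = 1) (n : ℕ) :
    ∀ m j, avoidFn P S (m + (n + 1)) j ≤
      avoidFn P S m j * Finset.univ.sup (avoidFn P S n) := by
  intro m
  induction m with
  | zero =>
    intro j
    rw [zero_add, avoidFn_succ]
    conv_rhs => rw [avoidFn_zero]
    split
    · simp
    · rw [one_mul]
      calc ∑ k, P j k * avoidFn P S n k
          ≤ ∑ k, P j k * Finset.univ.sup (avoidFn P S n) :=
            Finset.sum_le_sum fun k _ =>
              mul_le_mul_right (Finset.le_sup (Finset.mem_univ k)) _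
        _ = Finset.univ.sup (avoidFn P S n) := by
            rw [← Finset.sum_mul, hrow j, one_mul]
  | succ m ih =>
    intro j
    rw [show m + 1 + (n + 1) = (m + (n + 1)) + 1 from by omega, avoidFn_succ]
    conv_rhs => rw [avoidFn_succ]
    split
    · simp
    · rw [Finset.sum_mul]
      exact Finset.sum_le_sum fun k _ => by
        rw [mul_assoc]; exact mul_le_mul_right (ih k) _

lemma exists_avoid_lt_one (hrow : ∀ e, ∑ f, P e f = 1) {f₀ : E} (hf₀ : f₀ ∈ S) {e : E}
    (h : Relation.ReflTransGen (fun a b => 0 < P a b) e f₀) :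
    ∃ n, avoidFn P S n e < 1 := by
  induction h using Relation.ReflTransGen.head_induction_on with
  | refl => exact ⟨0, by rw [avoidFn_zero]; simp [hf₀]⟩
  | head hac _ ih =>
    rename_i a c _
    obtain ⟨n, hn⟩ := ih
    refine ⟨n + 1, ?_⟩
    rw [avoidFn_succ]
    split
    · exact zero_lt_one
    · have hPle : P a c ≤ 1 := by
        rw [← hrow a]
        exact Finset.single_le_sum (fun i _ => zero_le) (Finset.mem_univ c)
      have hPfin : P a c ≠ ⊤ := ne_top_of_le_ne_top ENNReal.one_ne_top hPle
      have hrest : ∑ k ∈ Finset.univ.erase c, P a k ≠ ⊤ := by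
        refine ne_top_of_le_ne_top ENNReal.one_ne_top ?_
        rw [← hrow a]
        exact Finset.sum_le_sum_of_subset (Finset.erase_subset _ _)
      calc ∑ k, P a k * avoidFn P S n k
          = P a c * avoidFn P S n c +
              ∑ k ∈ Finset.univ.erase c, P a k * avoidFn P S n k :=
            (Finset.add_sum_erase _ _ (Finset.mem_univ c)).symm
        _ ≤ P a c * avoidFn P S n c + ∑ k ∈ Finset.univ.erase c, P a k := by
            refine add_le_add_right (Finset.sum_le_sum fun k _ => ?_) _
            calc P a k * avoidFn P S n k ≤ P a k * 1 :=
                  mul_le_mul_right (avoid_le_one hrow n k) _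
              _ = P a k := mul_one _
        _ < P a c + ∑ k ∈ Finset.univ.erase c, P a k := by
            refine ENNReal.add_lt_add_right hrest ?_
            conv_rhs => rw [← mul_one (P a c)]
            exact (ENNReal.mul_lt_mul_iff_right (ne_of_gt hac) hPfin).2 hn
        _ = 1 := by rw [Finset.add_sum_erase _ _ (Finset.mem_univ c), hrow a]

lemma exists_sup_lt_one (hrow : ∀ e, ∑ f, P e f = 1)
    (hreach : ∀ e, ∃ n, avoidFn P S n e < 1) :
    ∃ N, Finset.univ.sup (avoidFn P S N) < 1 := by
  choose nn hnn using hreach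
  refine ⟨Finset.univ.sup nn, ?_⟩
  rw [Finset.sup_lt_iff (by simp : (⊥ : ℝ≥0∞) < 1)]
  intro e _
  exact lt_of_le_of_lt
    (avoid_mono hrow (Finset.le_sup (Finset.mem_univ e)) e) (hnn e)

lemma sup_avoid_pow (hrow : ∀ e, ∑ f, P e f = 1) (N : ℕ) :
    ∀ k, Finset.univ.sup (avoidFn P S (k * (N + 1) + N)) ≤
      (Finset.univ.sup (avoidFn P S N)) ^ (k + 1) := by
  intro k
  induction k with
  | zero => simp
  | succ k ih =>
    rw [show (k + 1) * (N + 1) + N = (k * (N + 1) + N) + (N + 1) from by ring]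
    refine Finset.sup_le fun j _ => ?_
    calc avoidFn P S (k * (N + 1) + N + (N + 1)) j
        ≤ avoidFn P S (k * (N + 1) + N) j * Finset.univ.sup (avoidFn P S N) :=
          avoid_shift hrow N _ j
      _ ≤ (Finset.univ.sup (avoidFn P S N)) ^ (k + 1) * Finset.univ.sup (avoidFn P S N) := by
          refine mul_le_mul_left (le_trans (Finset.le_sup (Finset.mem_univ j)) ih) _
      _ = (Finset.univ.sup (avoidFn P S N)) ^ (k + 1 + 1) := (pow_succ _ _).symm

lemma kac_formula (P : E → E → ℝ≥0∞) (S : Set E) (π : E → ℝ≥0∞)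
    (hrow : ∀ e, ∑ f, P e f = 1)
    (hπ : ∑ e, π e = 1)
    (hstat : ∀ f, ∑ e, π e * P e f = π f)
    (hreach : ∀ e, ∃ n, avoidFn P S n e < 1) :
    ∑ e ∈ Finset.univ.filter (· ∈ S), π e * returnTime P S e = 1 := by
  classical
  set a : ℕ → ℝ≥0∞ := fun n => ∑ j, π j * avoidFn P S n j with ha
  set t : ℕ → ℝ≥0∞ := fun n =>
    ∑ e ∈ Finset.univ.filter (· ∈ S), ∑ j, π e * P e j * avoidFn P S n j with ht
  -- Step A
  have key : ∀ n, t n + a (n + 1) = a n := by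
    intro n
    have h1 : a (n + 1) =
        ∑ e ∈ Finset.univ.filter (fun e => ¬ e ∈ S), ∑ j, π e * P e j * avoidFn P S n j := by
      rw [ha]
      simp only
      rw [Finset.sum_filter]
      refine Finset.sum_congr rfl fun j _ => ?_
      rw [avoidFn_succ]
      by_cases h : j ∈ S
      · simp [h]
      · simp only [h, if_false, if_true, not_false_iff]
        rw [Finset.mul_sum]
        exact Finset.sum_congr rfl fun k _ => (mul_assoc _ _ _).symm
    rw [ht, h1]
    simp only
    rw [Finset.sum_filter_add_sum_filter_not Finset.univ (· ∈ S)
      (fun e => ∑ j, π e * P e j * avoidFn P S n j)]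
    rw [Finset.sum_comm]
    rw [ha]
    refine Finset.sum_congr rfl fun j _ => ?_
    calc ∑ e, π e * P e j * avoidFn P S n j
        = (∑ e, π e * P e j) * avoidFn P S n j := (Finset.sum_mul _ _ _).symm
      _ = π j * avoidFn P S n j := by rw [hstat j]
  -- Step B
  have partial_eq : ∀ N, (∑ n ∈ Finset.range N, t n) + a N = a 0 := by
    intro N
    induction N with
    | zero => simp
    | succ N ih =>
      rw [Finset.sum_range_succ, add_assoc, key N, ih]
  -- Step C : tsum t = a 0
  have ha0fin : a 0 ≠ ⊤ := by
    refine ne_top_of_le_ne_top ENNReal.one_ne_top ?_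
    rw [← hπ, ha]
    exact Finset.sum_le_sum fun j _ => by
      calc π j * avoidFn P S 0 j ≤ π j * 1 := mul_le_mul_right (avoid_le_one hrow 0 j) _
        _ = π j := mul_one _
  have haN : ∀ N, a N ≤ Finset.univ.sup (avoidFn P S N) := by
    intro N
    rw [ha]
    calc ∑ j, π j * avoidFn P S N j
        ≤ ∑ j, π j * Finset.univ.sup (avoidFn P S N) :=
          Finset.sum_le_sum fun j _ =>
            mul_le_mul_right (Finset.le_sup (Finset.mem_univ j)) _
      _ = Finset.univ.sup (avoidFn P S N) := by rw [← Finset.sum_mul, hπ, one_mul]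
  have htsum : ∑' n, t n = a 0 := by
    obtain ⟨N, hN⟩ := exists_sup_lt_one hrow hreach
    set q := Finset.univ.sup (avoidFn P S N) with hq
    refine le_antisymm ?_ ?_
    · rw [ENNReal.tsum_eq_iSup_nat]
      refine iSup_le fun M => ?_
      calc ∑ n ∈ Finset.range M, t n ≤ (∑ n ∈ Finset.range M, t n) + a M := le_self_add
        _ = a 0 := partial_eq M
    · have hub : ∀ k : ℕ, a 0 ≤ (∑' n, t n) + q ^ (k + 1) := by
        intro k
        calc a 0 = (∑ n ∈ Finset.range (k * (N + 1) + N), t n) + a (k * (N + 1) + N) :=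
              (partial_eq _).symm
          _ ≤ (∑' n, t n) + q ^ (k + 1) := by
              refine add_le_add (ENNReal.sum_le_tsum _) ?_
              exact le_trans (haN _) (sup_avoid_pow hrow N k)
      refine ge_of_tendsto' (x := Filter.atTop) ?_ hub
      have htends : Filter.Tendsto (fun k : ℕ => q ^ (k + 1)) Filter.atTop (nhds 0) := by
        have := ENNReal.tendsto_pow_atTop_nhds_zero_of_lt_one hN
        exact this.comp (Filter.tendsto_add_atTop_nat 1)
      have := Filter.Tendsto.const_add (∑' n, t n) htends
      simpa using this
  -- Step D : conclusion
  have hsplit : ∑ e ∈ Finset.univ.filter (· ∈ S), π e * returnTime P S e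
      = (∑ e ∈ Finset.univ.filter (· ∈ S), π e) + ∑' n, t n := by
    have hret : ∀ e, π e * returnTime P S e
        = π e + ∑ j, ∑' n, π e * P e j * avoidFn P S n j := by
      intro e
      rw [returnTime, tsum_fintype, mul_add, mul_one, Finset.mul_sum]
      congr 1
      refine Finset.sum_congr rfl fun j _ => ?_
      rw [meanHit_eq hrow j, ← ENNReal.tsum_mul_left, ← ENNReal.tsum_mul_left]
      exact tsum_congr fun n => by ring
    rw [Finset.sum_congr rfl fun e _ => hret e, Finset.sum_add_distrib]
    congr 1
    rw [ht]
    rw [Summable.tsum_finsetSum fun _ _ => ENNReal.summable]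
    exact Finset.sum_congr rfl fun e _ => (Summable.tsum_finsetSum fun _ _ => ENNReal.summable).symm
  have ha0 : a 0 = ∑ j ∈ Finset.univ.filter (fun j => ¬ j ∈ S), π j := by
    rw [ha]
    simp only
    rw [Finset.sum_filter]
    refine Finset.sum_congr rfl fun j _ => ?_
    rw [avoidFn_zero]
    by_cases h : j ∈ S <;> simp [h]
  rw [hsplit, htsum, ha0, Finset.sum_filter_add_sum_filter_not, hπ]

end Kac

section Cards
variable {V : Type*} [Fintype V] [DecidableEq V] (G : SimpleGraph V) [DecidableRel G.Adj]

lemma card_start (v : V) :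
    (Finset.univ.filter fun f : {e : V × V // G.Adj e.1 e.2} => v = f.val.1).card = G.degree v := by
  rw [SimpleGraph.degree]
  refine Finset.card_bij' (fun f _ => f.val.2)
    (fun u hu => ⟨(v, u), (G.mem_neighborFinset v u).1 hu⟩) ?_ ?_ ?_ ?_
  · intro f hf
    rw [Finset.mem_filter] at hf
    rw [SimpleGraph.mem_neighborFinset]
    exact hf.2 ▸ f.prop
  · intro u hu; simp
  · intro f hf
    rw [Finset.mem_filter] at hf
    ext <;> simp [hf.2]
  · intro u hu; rfl

lemma card_end (v : V) :
    (Finset.univ.filter fun e : {e : V × V // G.Adj e.1 e.2} => e.val.2 = v).card = G.degree v := by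
  rw [SimpleGraph.degree]
  refine Finset.card_bij' (fun f _ => f.val.1)
    (fun u hu => ⟨(u, v), G.adj_symm ((G.mem_neighborFinset v u).1 hu)⟩) ?_ ?_ ?_ ?_
  · intro f hf
    rw [Finset.mem_filter] at hf
    rw [SimpleGraph.mem_neighborFinset]
    exact G.adj_symm (hf.2 ▸ f.prop)
  · intro u hu; simp
  · intro f hf
    rw [Finset.mem_filter] at hf
    ext <;> simp [hf.2]
  · intro u hu; rfl

lemma card_start_ne {v w : V} (hvw : G.Adj v w) :
    (Finset.univ.filter fun f : {e : V × V // G.Adj e.1 e.2} => v = f.val.1 ∧ f.val.2 ≠ w).card = G.degree v - 1 := by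
  rw [SimpleGraph.degree, ← Finset.card_erase_of_mem ((G.mem_neighborFinset v w).2 hvw)]
  refine Finset.card_bij' (fun f _ => f.val.2)
    (fun u hu => ⟨(v, u), (G.mem_neighborFinset v u).1 (Finset.mem_of_mem_erase hu)⟩)
    ?_ ?_ ?_ ?_
  · intro f hf
    rw [Finset.mem_filter] at hf
    rw [Finset.mem_erase, SimpleGraph.mem_neighborFinset]
    exact ⟨hf.2.2, hf.2.1 ▸ f.prop⟩
  · intro u hu
    rw [Finset.mem_erase] at hu
    simp [hu.1]
  · intro f hf
    rw [Finset.mem_filter] at hf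
    ext <;> simp [hf.2.1]
  · intro u hu; rfl

lemma card_end_ne {v w : V} (hvw : G.Adj v w) :
    (Finset.univ.filter fun e : {e : V × V // G.Adj e.1 e.2} => e.val.2 = v ∧ w ≠ e.val.1).card = G.degree v - 1 := by
  rw [SimpleGraph.degree, ← Finset.card_erase_of_mem ((G.mem_neighborFinset v w).2 hvw)]
  refine Finset.card_bij' (fun f _ => f.val.1)
    (fun u hu => ⟨(u, v), G.adj_symm ((G.mem_neighborFinset v u).1 (Finset.mem_of_mem_erase hu))⟩)
    ?_ ?_ ?_ ?_
  · intro f hf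
    rw [Finset.mem_filter] at hf
    rw [Finset.mem_erase, SimpleGraph.mem_neighborFinset]
    exact ⟨fun h => hf.2.2 h.symm, G.adj_symm (hf.2.1 ▸ f.prop)⟩
  · intro u hu
    rw [Finset.mem_erase] at hu
    exact Finset.mem_filter.2 ⟨Finset.mem_univ _, rfl, fun h => hu.1 h.symm⟩
  · intro f hf
    rw [Finset.mem_filter] at hf
    ext <;> simp [hf.2.1]
  · intro u hu; rfl

lemma card_edges : Fintype.card {e : V × V // G.Adj e.1 e.2} = ∑ v, G.degree v := by
  rw [← SimpleGraph.dart_card_eq_sum_degrees]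
  exact Fintype.card_congr
    { toFun := fun e => ⟨e.val, e.prop⟩
      invFun := fun d => ⟨d.toProd, d.adj⟩
      left_inv := fun e => rfl
      right_inv := fun d => rfl }

end Cards

/-- For the backtrack-downweighted edge chain `P̂^(α) = α P̂^(1) + (1−α) P̂^(0)` on a
finite undirected connected graph without dangling edges, whenever the edge chain is
ergodic, the second-order mean return time at equilibrium is
`τ̃_i = (∑_j d_j)/d_i`, independently of `α`. -/
theorem backtrackDownweighted_return_times {V : Type*} [Fintype V] [DecidableEq V]
    (G : SimpleGraph V) [DecidableRel G.Adj] (hconn : G.Connected)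
    (hdeg : ∀ v, 2 ≤ G.degree v)
    (hnd : ∀ i j : V, G.Adj i j → ∃ k, G.Adj j k ∧ k ≠ i)
    (α : ℝ≥0∞) (hα : α ≤ 1)
    -- the uniform line-graph walk
    (Phat1 : {e : V × V // G.Adj e.1 e.2} → {e : V × V // G.Adj e.1 e.2} → ℝ≥0∞)
    (hPhat1 : ∀ e f, Phat1 e f =
      if e.val.2 = f.val.1 then ((G.degree f.val.1 : ℝ≥0∞))⁻¹ else 0)
    -- the non-backtracking walk
    (Phat0 : {e : V × V // G.Adj e.1 e.2} → {e : V × V // G.Adj e.1 e.2} → ℝ≥0∞)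
    (hPhat0 : ∀ e f, Phat0 e f =
      if e.val.2 = f.val.1 ∧ f.val.2 ≠ e.val.1 then
        ((G.degree e.val.2 : ℝ≥0∞) - (if G.Adj e.val.2 e.val.1 then 1 else 0))⁻¹
      else 0)
    (Phata : {e : V × V // G.Adj e.1 e.2} → {e : V × V // G.Adj e.1 e.2} → ℝ≥0∞)
    (hPhata : ∀ e f, Phata e f = α * Phat1 e f + (1 - α) * Phat0 e f)
    -- ergodicity of the edge chain
    (hirr : ∀ e f, Relation.ReflTransGen (fun a b => 0 < Phata a b) e f)
    -- the (uniform) stationary distribution of the bi-stochastic matrix `P̂^(α)`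
    (πhat : {e : V × V // G.Adj e.1 e.2} → ℝ≥0∞)
    (hπhat : ∀ e, πhat e = (∑ j, (G.degree j : ℝ≥0∞))⁻¹)
    -- the second-order mean return time to node `i` at equilibrium
    (τ : V → ℝ≥0∞)
    (hτ : ∀ i, τ i =
      (∑ e ∈ Finset.univ.filter (fun e : {e : V × V // G.Adj e.1 e.2} => e.val.2 = i),
          πhat e * returnTime Phata {f | f.val.2 = i} e) /
        (∑ e ∈ Finset.univ.filter (fun e : {e : V × V // G.Adj e.1 e.2} => e.val.2 = i),
          πhat e)) :
    ∀ i, τ i = (∑ j, (G.degree j : ℝ≥0∞)) / (G.degree i : ℝ≥0∞) := by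
  intro i
  -- basic degree facts
  have hdne0 : ∀ v, ((G.degree v : ℝ≥0∞)) ≠ 0 := fun v => by
    have := hdeg v
    simp only [ne_eq, Nat.cast_eq_zero]
    omega
  have hdnetop : ∀ v, ((G.degree v : ℝ≥0∞)) ≠ ⊤ := fun v => ENNReal.natCast_ne_top _
  have hone_lt : ∀ v, (1 : ℝ≥0∞) < (G.degree v : ℝ≥0∞) := fun v => by
    have h2 := hdeg v
    exact_mod_cast Nat.lt_of_lt_of_le Nat.one_lt_two h2
  have hDne0 : (∑ j, (G.degree j : ℝ≥0∞)) ≠ 0 := by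
    obtain ⟨v⟩ := hconn.nonempty
    intro h
    rw [Finset.sum_eq_zero_iff] at h
    exact hdne0 v (h v (Finset.mem_univ v))
  have hDnetop : (∑ j, (G.degree j : ℝ≥0∞)) ≠ ⊤ := by
    refine (ENNReal.sum_lt_top.2 fun j _ => ?_).ne
    exact (hdnetop j).lt_top
  -- row sums
  have hrow1 : ∀ e, ∑ f, Phat1 e f = 1 := by
    intro e
    simp_rw [hPhat1]
    rw [← Finset.sum_filter]
    rw [Finset.sum_congr rfl (fun f hf => by
      rw [← (Finset.mem_filter.1 hf).2] :
      ∀ f ∈ Finset.univ.filter fun f : {e : V × V // G.Adj e.1 e.2} => e.val.2 = f.val.1,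
        ((G.degree f.val.1 : ℝ≥0∞))⁻¹ = ((G.degree e.val.2 : ℝ≥0∞))⁻¹)]
    rw [Finset.sum_const, card_start G e.val.2, nsmul_eq_mul,
      ENNReal.mul_inv_cancel (hdne0 _) (hdnetop _)]
  have hrow0 : ∀ e, ∑ f, Phat0 e f = 1 := by
    intro e
    have hA : G.Adj e.val.2 e.val.1 := G.adj_symm e.prop
    simp_rw [hPhat0]
    rw [← Finset.sum_filter, Finset.sum_const, card_start_ne G hA, nsmul_eq_mul,
      if_pos hA, ENNReal.natCast_sub, Nat.cast_one]
    refine ENNReal.mul_inv_cancel ?_ ?_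
    · intro h
      exact absurd (tsub_eq_zero_iff_le.1 h) (not_le.2 (hone_lt _))
    · exact ne_top_of_le_ne_top (hdnetop _) tsub_le_self
  -- column sums
  have hcol1 : ∀ f, ∑ e, Phat1 e f = 1 := by
    intro f
    simp_rw [hPhat1]
    rw [← Finset.sum_filter, Finset.sum_const, card_end G f.val.1, nsmul_eq_mul,
      ENNReal.mul_inv_cancel (hdne0 _) (hdnetop _)]
  have hcol0 : ∀ f, ∑ e, Phat0 e f = 1 := by
    intro f
    simp_rw [hPhat0]
    rw [← Finset.sum_filter]
    rw [Finset.sum_congr rfl (fun e he => by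
      have hm := (Finset.mem_filter.1 he).2
      rw [if_pos (G.adj_symm e.prop), hm.1] :
      ∀ e ∈ Finset.univ.filter
          fun e : {e : V × V // G.Adj e.1 e.2} => e.val.2 = f.val.1 ∧ f.val.2 ≠ e.val.1,
        ((G.degree e.val.2 : ℝ≥0∞) - (if G.Adj e.val.2 e.val.1 then 1 else 0))⁻¹
          = ((G.degree f.val.1 : ℝ≥0∞) - 1)⁻¹)]
    rw [Finset.sum_const, card_end_ne G f.prop, nsmul_eq_mul,
      ENNReal.natCast_sub, Nat.cast_one]
    refine ENNReal.mul_inv_cancel ?_ ?_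
    · intro h
      exact absurd (tsub_eq_zero_iff_le.1 h) (not_le.2 (hone_lt _))
    · exact ne_top_of_le_ne_top (hdnetop _) tsub_le_self
  -- convex combination facts
  have hαtop : α ≠ ⊤ := ne_top_of_le_ne_top ENNReal.one_ne_top hα
  have hcoeff : α + (1 - α) = 1 := by
    rw [add_comm]
    exact tsub_add_cancel_of_le hα
  have hrowa : ∀ e, ∑ f, Phata e f = 1 := by
    intro e
    simp_rw [hPhata]
    rw [Finset.sum_add_distrib, ← Finset.mul_sum, ← Finset.mul_sum, hrow1 e, hrow0 e,
      mul_one, mul_one, hcoeff]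
  have hcola : ∀ f, ∑ e, Phata e f = 1 := by
    intro f
    simp_rw [hPhata]
    rw [Finset.sum_add_distrib, ← Finset.mul_sum, ← Finset.mul_sum, hcol1 f, hcol0 f,
      mul_one, mul_one, hcoeff]
  -- stationary distribution facts
  have hπsum : ∑ e, πhat e = 1 := by
    simp_rw [hπhat]
    rw [Finset.sum_const, Finset.card_univ, card_edges G, nsmul_eq_mul, Nat.cast_sum,
      ENNReal.mul_inv_cancel hDne0 hDnetop]
  have hstat : ∀ f, ∑ e, πhat e * Phata e f = πhat f := by
    intro f
    simp_rw [hπhat]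
    rw [← Finset.mul_sum, hcola f, mul_one]
  -- reachability of the target set
  have hnbr : 0 < (G.neighborFinset i).card := by
    have := hdeg i
    rw [SimpleGraph.degree] at this
    omega
  obtain ⟨w, hw⟩ := Finset.card_pos.1 hnbr
  have hwi : G.Adj i w := (G.mem_neighborFinset i w).1 hw
  set S : Set {e : V × V // G.Adj e.1 e.2} := {f | f.val.2 = i} with hSdef
  have hf₀ : (⟨(w, i), G.adj_symm hwi⟩ : {e : V × V // G.Adj e.1 e.2}) ∈ S := rfl
  have hreach : ∀ e, ∃ n, avoidFn Phata S n e < 1 := fun e =>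
    exists_avoid_lt_one hrowa hf₀ (hirr e ⟨(w, i), G.adj_symm hwi⟩)
  have hnum := kac_formula Phata S πhat hrowa hπsum hstat hreach
  -- identify the filters
  have hfe : (Finset.univ.filter
      fun e : {e : V × V // G.Adj e.1 e.2} => e.val.2 = i)
      = Finset.univ.filter (· ∈ S) := by
    ext e
    simp [hSdef]
  -- the denominator
  have hden : ∑ e ∈ Finset.univ.filter
      (fun e : {e : V × V // G.Adj e.1 e.2} => e.val.2 = i), πhat e
      = (G.degree i : ℝ≥0∞) * (∑ j, (G.degree j : ℝ≥0∞))⁻¹ := by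
    simp_rw [hπhat]
    rw [Finset.sum_const, card_end G i, nsmul_eq_mul]
  rw [hτ i, hden]
  have hnum' : ∑ e ∈ Finset.univ.filter
      (fun e : {e : V × V // G.Adj e.1 e.2} => e.val.2 = i),
      πhat e * returnTime Phata {f | f.val.2 = i} e = 1 := by
    rw [hfe]
    convert hnum using 2
    exact (Finset.filter_congr_decidable _ _ _).trans
      (Finset.filter_congr_decidable _ _ _).symm
  rw [hnum', ENNReal.div_eq_inv_mul, ENNReal.mul_inv (Or.inl (hdne0 i)) (Or.inl (hdnetop i)),
    inv_inv, mul_one, div_eq_mul_inv, mul_comm]
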